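/- Let A and B be C*-algebras and let ψ: A ⊗ 𝒦 → M(B ⊗ 𝒦) be a nondegenerate homomorphism such that ψ(1_A ⊗ k) = 1_B ⊗ k for all k ∈ 𝒦 (using the canonical extension of ψ to multipliers). Then there exists a unique nondegenerate homomorphism φ: A → M(B) such that ψ = φ ⊗ id_𝒦. -/

import Mathlib

open scoped MultiplierAlgebra

set_option synthInstance.maxHeartbeats 400000
set_option maxHeartbeats 1000000

noncomputable section

/-! ## Framework

`𝓜(ℂ, A)` is the multiplier algebra `M(A)` of a (non-unital) C⋆-algebra `A`
(Mathlib's `DoubleCentralizer`), and `(a : 𝓜(ℂ, A))` is the canonical image of `a : A`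
in it. -/

/-- A system of matrix units `{u i j}` (indexed by `ℕ`) in a non-unital C⋆-algebra `K`,
whose linear span is dense.  A C⋆-algebra carrying such a system is precisely (i.e., is
⋆-isomorphic to) the C⋆-algebra `𝒦` of compact operators on a separable
infinite-dimensional Hilbert space. -/
structure MatrixUnits (K : Type*) [NonUnitalCStarAlgebra K] where
  u : ℕ → ℕ → K
  u_ne_zero : ∀ i j, u i j ≠ 0
  u_mul : ∀ i j k l, u i j * u k l = if j = k then u i l else 0
  star_u : ∀ i j, star (u i j) = u j i
  dense_span : Dense (Submodule.span ℂ (Set.range fun p : ℕ × ℕ => u p.1 p.2) : Set K)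

/-- `K` is (a copy of) the C⋆-algebra `𝒦` of compact operators on a separable
infinite-dimensional Hilbert space. -/
def IsCompactOperatorsAlgebra (K : Type*) [NonUnitalCStarAlgebra K] : Prop :=
  Nonempty (MatrixUnits K)

/-- A homomorphism `φ : A → M(B)` is *nondegenerate* if `φ(A)·B` is dense in `B`. -/
def Nondegenerate {A B : Type*} [NonUnitalCStarAlgebra A] [NonUnitalCStarAlgebra B]
    (φ : A →⋆ₙₐ[ℂ] 𝓜(ℂ, B)) : Prop :=
  ∀ b : B, (b : 𝓜(ℂ, B)) ∈
    closure (Submodule.span ℂ {x : 𝓜(ℂ, B) | ∃ (a : A) (c : B), x = φ a * c} : Set 𝓜(ℂ, B))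

/-- The `A`-relative commutant `C(A, ι) = {a ∈ M(A) : ι(k)·a = a·ι(k) ∈ A for all k ∈ K}`
of a `K`-algebra `(A, ι)`. -/
def relComm {K A : Type*} [NonUnitalCStarAlgebra K] [NonUnitalCStarAlgebra A]
    (ι : K →⋆ₙₐ[ℂ] 𝓜(ℂ, A)) : Set 𝓜(ℂ, A) :=
  {a | ∀ k : K, ι k * a = a * ι k ∧ a * ι k ∈ Set.range ((↑) : A → 𝓜(ℂ, A))}

/-- A witness that `T` is (a copy of) the spatial tensor product `B ⊗ K`: a bilinear,
multiplicative, star-preserving map on elementary tensors whose range has dense linear span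
and which satisfies `‖b ⊗ k‖ = ‖b‖‖k‖`.  (Since the compact operators `𝒦` are nuclear and
simple, for `K = 𝒦` such data identifies `T` with the minimal tensor product `B ⊗ 𝒦`.) -/
structure CStarTensor (B K T : Type*) [NonUnitalCStarAlgebra B] [NonUnitalCStarAlgebra K]
    [NonUnitalCStarAlgebra T] where
  tmul : B → K → T
  add_tmul : ∀ b b' k, tmul (b + b') k = tmul b k + tmul b' k
  tmul_add : ∀ b k k', tmul b (k + k') = tmul b k + tmul b k'
  smul_tmul : ∀ (c : ℂ) b k, tmul (c • b) k = c • tmul b k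
  tmul_smul : ∀ (c : ℂ) b k, tmul b (c • k) = c • tmul b k
  tmul_mul_tmul : ∀ b b' k k', tmul b k * tmul b' k' = tmul (b * b') (k * k')
  star_tmul : ∀ b k, star (tmul b k) = tmul (star b) (star k)
  norm_tmul : ∀ b k, ‖tmul b k‖ = ‖b‖ * ‖k‖
  dense_span : Dense (Submodule.span ℂ {x : T | ∃ b k, x = tmul b k} : Set T)

/-- `ι` is the canonical nondegenerate homomorphism `1 ⊗ id : K → M(B ⊗ K)`, characterized
by `(1 ⊗ k)·(b ⊗ k') = b ⊗ (k·k')` and `(b ⊗ k')·(1 ⊗ k) = b ⊗ (k'·k)`. -/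
def IsOneTensorId {B K T : Type*} [NonUnitalCStarAlgebra B] [NonUnitalCStarAlgebra K]
    [NonUnitalCStarAlgebra T] (τ : CStarTensor B K T) (ι : K →⋆ₙₐ[ℂ] 𝓜(ℂ, T)) : Prop :=
  ∀ (k : K) (b : B) (k' : K),
    ι k * (τ.tmul b k' : 𝓜(ℂ, T)) = (τ.tmul b (k * k') : 𝓜(ℂ, T)) ∧
      (τ.tmul b k' : 𝓜(ℂ, T)) * ι k = (τ.tmul b (k' * k) : 𝓜(ℂ, T))

namespace Stmt7Aux

section Mult
variable {A : Type*} [NonUnitalCStarAlgebra A]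

lemma norm_coe (a : A) : ‖(a : 𝓜(ℂ, A))‖ = ‖a‖ := by
  rw [← DoubleCentralizer.norm_fst, DoubleCentralizer.coe_fst,
    ContinuousLinearMap.opNorm_mul_apply]

lemma coe_add (a b : A) : ((a + b : A) : 𝓜(ℂ, A)) = a + b :=
  map_add (DoubleCentralizer.coeHom (𝕜 := ℂ) (A := A)) a b

lemma coe_smul (c : ℂ) (a : A) : ((c • a : A) : 𝓜(ℂ, A)) = c • (a : 𝓜(ℂ, A)) :=
  map_smul (DoubleCentralizer.coeHom (𝕜 := ℂ) (A := A)) c a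

lemma coe_sub (a b : A) : ((a - b : A) : 𝓜(ℂ, A)) = a - b :=
  map_sub (DoubleCentralizer.coeHom (𝕜 := ℂ) (A := A)) a b

lemma coe_star (a : A) : ((star a : A) : 𝓜(ℂ, A)) = star (a : 𝓜(ℂ, A)) :=
  map_star (DoubleCentralizer.coeHom (𝕜 := ℂ) (A := A)) a

lemma coe_zero : ((0 : A) : 𝓜(ℂ, A)) = 0 :=
  map_zero (DoubleCentralizer.coeHom (𝕜 := ℂ) (A := A))

lemma M_ext {m m' : 𝓜(ℂ, A)} (h1 : ∀ b, m.fst b = m'.fst b)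
    (h2 : ∀ b, m.snd b = m'.snd b) : m = m' :=
  DoubleCentralizer.ext _ _ _ _
    (Prod.ext (ContinuousLinearMap.ext h1) (ContinuousLinearMap.ext h2))

lemma coe_mul_coe (a b : A) : ((a * b : A) : 𝓜(ℂ, A)) = ↑a * ↑b :=
  map_mul (DoubleCentralizer.coeHom (𝕜 := ℂ) (A := A)) a b

lemma isometry_coe : Isometry ((↑) : A → 𝓜(ℂ, A)) :=
  AddMonoidHomClass.isometry_of_norm (DoubleCentralizer.coeHom (𝕜 := ℂ) (A := A)) norm_coe

lemma coe_inj : Function.Injective ((↑) : A → 𝓜(ℂ, A)) :=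
  Isometry.injective isometry_coe

lemma left_cancel {x y : A} (h : ∀ b : A, b * x = b * y) : x = y := by
  have h2 : star (x - y) * (x - y) = 0 := by
    rw [mul_sub, h (star (x - y)), sub_self]
  rwa [CStarRing.star_mul_self_eq_zero_iff, sub_eq_zero] at h2

lemma right_cancel {x y : A} (h : ∀ b : A, x * b = y * b) : x = y := by
  have h2 : (x - y) * star (x - y) = 0 := by
    rw [sub_mul, h (star (x - y)), sub_self]
  rwa [CStarRing.mul_star_self_eq_zero_iff, sub_eq_zero] at h2

lemma fst_mul_right (m : 𝓜(ℂ, A)) (a b : A) : m.fst (a * b) = m.fst a * b := by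
  refine left_cancel fun c => ?_
  calc c * m.fst (a * b) = m.snd c * (a * b) := (m.central c (a * b)).symm
    _ = m.snd c * a * b := (mul_assoc _ _ _).symm
    _ = c * m.fst a * b := by rw [m.central]
    _ = c * (m.fst a * b) := mul_assoc _ _ _

lemma snd_mul_left (m : 𝓜(ℂ, A)) (a b : A) : m.snd (a * b) = a * m.snd b := by
  refine right_cancel fun c => ?_
  calc m.snd (a * b) * c = (a * b) * m.fst c := m.central _ _
    _ = a * (b * m.fst c) := mul_assoc _ _ _
    _ = a * (m.snd b * c) := by rw [m.central]
    _ = a * m.snd b * c := (mul_assoc _ _ _).symm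

lemma mul_coe (m : 𝓜(ℂ, A)) (a : A) :
    m * (a : 𝓜(ℂ, A)) = ((m.fst a : A) : 𝓜(ℂ, A)) := by
  refine DoubleCentralizer.ext _ _ _ _ (Prod.ext ?_ ?_)
  · exact ContinuousLinearMap.ext fun x => fst_mul_right m a x
  · exact ContinuousLinearMap.ext fun x => m.central x a

lemma coe_mul' (m : 𝓜(ℂ, A)) (a : A) :
    (a : 𝓜(ℂ, A)) * m = ((m.snd a : A) : 𝓜(ℂ, A)) := by
  refine DoubleCentralizer.ext _ _ _ _ (Prod.ext ?_ ?_)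
  · exact ContinuousLinearMap.ext fun x => (m.central a x).symm
  · exact ContinuousLinearMap.ext fun x => snd_mul_left m x a

end Mult

section Density
variable {E F : Type*} [NormedAddCommGroup E] [NormedSpace ℂ E]
  [NormedAddCommGroup F] [NormedSpace ℂ F]

lemma closure_span_into (f : E → F) (hf : Continuous f)
    (hadd : ∀ x y, f (x + y) = f x + f y)
    (hsmul : ∀ (c : ℂ) (x), f (c • x) = c • f x)
    {S : Set E} {W : Submodule ℂ F} (hW : IsClosed (W : Set F))
    (h : ∀ s ∈ S, f s ∈ W) {x : E}
    (hx : x ∈ closure (Submodule.span ℂ S : Set E)) : f x ∈ W := by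
  have hzero : f 0 ∈ W := by
    have := hsmul 0 0
    rw [zero_smul, zero_smul] at this
    rw [this]; exact W.zero_mem
  have hsub : (Submodule.span ℂ S : Set E) ⊆ f ⁻¹' W := by
    intro y hy
    induction hy using Submodule.span_induction with
    | mem z hz => exact h z hz
    | zero => exact hzero
    | add x y hx hy hfx hfy => simpa [hadd] using W.add_mem hfx hfy
    | smul c x hx hfx => simpa [hsmul] using W.smul_mem c hfx
  exact closure_minimal hsub (hW.preimage hf) hx

lemma span_dense_into (f : E → F) (hf : Continuous f)
    (hadd : ∀ x y, f (x + y) = f x + f y)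
    (hsmul : ∀ (c : ℂ) (x), f (c • x) = c • f x)
    {S : Set E} (hS : Dense (Submodule.span ℂ S : Set E))
    {W : Submodule ℂ F} (hW : IsClosed (W : Set F))
    (h : ∀ s ∈ S, f s ∈ W) (x : E) : f x ∈ W :=
  closure_span_into f hf hadd hsmul hW h (by rw [hS.closure_eq]; trivial)

lemma span_dense_eq {f g : E → F} (hf : Continuous f) (hg : Continuous g)
    (hfadd : ∀ x y, f (x + y) = f x + f y) (hgadd : ∀ x y, g (x + y) = g x + g y)
    (hfsmul : ∀ (c : ℂ) (x), f (c • x) = c • f x)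
    (hgsmul : ∀ (c : ℂ) (x), g (c • x) = c • g x)
    {S : Set E} (hS : Dense (Submodule.span ℂ S : Set E))
    (h : ∀ s ∈ S, f s = g s) (x : E) : f x = g x := by
  have := span_dense_into (f := fun x => f x - g x) (hf.sub hg)
    (fun x y => by rw [hfadd, hgadd]; abel)
    (fun c x => by rw [hfsmul, hgsmul, smul_sub])
    hS (W := ⊥) (by simpa using isClosed_singleton (x := (0 : F)))
    (fun s hs => by simp [h s hs]) x
  rw [Submodule.mem_bot, sub_eq_zero] at this
  exact this

lemma isometry_pullback (f : E →ₗ[ℂ] F) (hf : Isometry f) [CompleteSpace E]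
    (s : Set E) {x : E}
    (hx : f x ∈ closure (Submodule.span ℂ (f '' s) : Set F)) :
    x ∈ closure (Submodule.span ℂ s : Set E) := by
  have h1 : (Submodule.span ℂ (f '' s) : Set F) ⊆ f '' (Submodule.span ℂ s : Set E) := by
    rw [← Submodule.map_span]
    exact fun y hy => hy
  have h2 : IsClosed (f '' closure (Submodule.span ℂ s : Set E)) :=
    ((isComplete_image_iff hf.isUniformInducing).mpr
      isClosed_closure.isComplete).isClosed
  have h3 : closure (Submodule.span ℂ (f '' s) : Set F)
      ⊆ f '' closure (Submodule.span ℂ s : Set E) :=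
    closure_minimal (h1.trans (Set.image_mono (f := f) subset_closure)) h2
  obtain ⟨y, hy, hxy⟩ := h3 hx
  rwa [← hf.injective hxy]
end Density


section Tensor
variable {B K T : Type*} [NonUnitalCStarAlgebra B] [NonUnitalCStarAlgebra K]
  [NonUnitalCStarAlgebra T] (τ : CStarTensor B K T)

lemma tmul_zero_left (k : K) : τ.tmul 0 k = 0 := by
  have := τ.smul_tmul 0 0 k
  rwa [zero_smul, zero_smul] at this

lemma tmul_zero_right (b : B) : τ.tmul b 0 = 0 := by
  have := τ.tmul_smul 0 b 0
  rwa [zero_smul, zero_smul] at this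

lemma sub_tmul (b b' : B) (k : K) : τ.tmul (b - b') k = τ.tmul b k - τ.tmul b' k := by
  have : b - b' = b + (-1 : ℂ) • b' := by rw [neg_one_smul]; abel
  rw [this, τ.add_tmul, τ.smul_tmul, neg_one_smul]
  abel

lemma tmul_sub (b : B) (k k' : K) : τ.tmul b (k - k') = τ.tmul b k - τ.tmul b k' := by
  have : k - k' = k + (-1 : ℂ) • k' := by rw [neg_one_smul]; abel
  rw [this, τ.tmul_add, τ.tmul_smul, neg_one_smul]
  abel

lemma continuous_tmul_right (b : B) : Continuous fun k => τ.tmul b k := by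
  refine (LipschitzWith.of_dist_le_mul (K := ‖b‖₊) fun k k' => ?_).continuous
  rw [dist_eq_norm, dist_eq_norm, ← tmul_sub, τ.norm_tmul]
  simp [coe_nnnorm]

lemma continuous_tmul_left (k : K) : Continuous fun b => τ.tmul b k := by
  refine (LipschitzWith.of_dist_le_mul (K := ‖k‖₊) fun b b' => ?_).continuous
  rw [dist_eq_norm, dist_eq_norm, ← sub_tmul, τ.norm_tmul]
  simp [coe_nnnorm, mul_comm]

end Tensor

section MU
variable {K : Type*} [NonUnitalCStarAlgebra K] (mu : MatrixUnits K)

def eK : K := mu.u 0 0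

lemma e_mul_e : eK mu * eK mu = eK mu := by
  simp [eK, mu.u_mul]

lemma star_e : star (eK mu) = eK mu := mu.star_u 0 0

lemma norm_e : ‖eK mu‖ = 1 := by
  have h := CStarRing.norm_star_mul_self (x := eK mu)
  rw [star_e, e_mul_e] at h
  have hne : ‖eK mu‖ ≠ 0 := norm_ne_zero_iff.2 (mu.u_ne_zero 0 0)
  field_simp at h
  nlinarith [norm_nonneg (eK mu)]

lemma corner_scalar (k : K) : ∃ c : ℂ, eK mu * k * eK mu = c • eK mu := by
  classical
  let f : K →ₗ[ℂ] K :=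
    { toFun := fun k => eK mu * k * eK mu
      map_add' := fun x y => by rw [mul_add, add_mul]
      map_smul' := fun c x => by simp only [RingHom.id_apply]; rw [mul_smul_comm, smul_mul_assoc] }
  have hW : IsClosed ((ℂ ∙ eK mu) : Set K) := Submodule.closed_of_finiteDimensional _
  have hf : Continuous f := by
    show Continuous fun k => eK mu * k * eK mu
    exact (continuous_const.mul continuous_id).mul (continuous_const (y := eK mu))
  have key : f k ∈ (ℂ ∙ eK mu) := by
    refine span_dense_into f hf (map_add f) (map_smul f) mu.dense_span hW ?_ k
    rintro s ⟨⟨i, j⟩, rfl⟩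
    show eK mu * mu.u i j * eK mu ∈ _
    rw [eK, mu.u_mul]
    by_cases hi : (0 : ℕ) = i
    · rw [if_pos hi, mu.u_mul]
      by_cases hj : j = 0
      · rw [if_pos hj]; exact Submodule.mem_span_singleton_self _
      · rw [if_neg hj]; exact Submodule.zero_mem _
    · rw [if_neg hi, zero_mul]; exact Submodule.zero_mem _
  obtain ⟨c, hc⟩ := Submodule.mem_span_singleton.1 key
  exact ⟨c, hc.symm⟩

end MU

section Main
variable {K A B TA TB : Type*} [NonUnitalCStarAlgebra K] [NonUnitalCStarAlgebra A]
  [NonUnitalCStarAlgebra B] [NonUnitalCStarAlgebra TA] [NonUnitalCStarAlgebra TB]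
variable (mu : MatrixUnits K) (τA : CStarTensor A K TA) (τB : CStarTensor B K TB)
  (ζ : K →⋆ₙₐ[ℂ] 𝓜(ℂ, TB)) (ψ : TA →⋆ₙₐ[ℂ] 𝓜(ℂ, TB))

def PsiZeta : Prop := ∀ (a : A) (k k' : K),
    ψ (τA.tmul a (k' * k)) = ψ (τA.tmul a k') * ζ k ∧
      ψ (τA.tmul a (k * k')) = ζ k * ψ (τA.tmul a k')

def jBL : B →ₗ[ℂ] 𝓜(ℂ, TB) where
  toFun b := ↑(τB.tmul b (eK mu))
  map_add' b b' := by rw [τB.add_tmul, coe_add]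
  map_smul' c b := by simp only [RingHom.id_apply]; rw [τB.smul_tmul, coe_smul]

lemma norm_jBL (b : B) : ‖jBL mu τB b‖ = ‖b‖ := by
  show ‖(↑(τB.tmul b (eK mu)) : 𝓜(ℂ, TB))‖ = ‖b‖
  rw [norm_coe, τB.norm_tmul, norm_e, mul_one]

lemma isometry_jBL : Isometry (jBL mu τB) :=
  AddMonoidHomClass.isometry_of_norm _ (norm_jBL mu τB)

lemma jB_inj {c c' : B}
    (h : (↑(τB.tmul c (eK mu)) : 𝓜(ℂ, TB)) = ↑(τB.tmul c' (eK mu))) : c = c' :=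
  (isometry_jBL mu τB).injective h

lemma range_jBL_closed : IsClosed ((LinearMap.range (jBL mu τB)) : Set 𝓜(ℂ, TB)) := by
  have h1 : IsComplete (⇑(jBL mu τB) '' Set.univ) :=
    (isComplete_image_iff (isometry_jBL mu τB).isUniformInducing).mpr (completeSpace_iff_isComplete_univ.mp inferInstance)
  rw [Set.image_univ] at h1
  rw [LinearMap.coe_range]
  exact h1.isClosed

lemma exists_corner (hζ : IsOneTensorId τB ζ) (t : TB) :
    ∃ c : B, (↑(τB.tmul c (eK mu)) : 𝓜(ℂ, TB)) =
      ζ (eK mu) * (t : 𝓜(ℂ, TB)) * ζ (eK mu) := by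
  have key : ζ (eK mu) * (t : 𝓜(ℂ, TB)) * ζ (eK mu) ∈ LinearMap.range (jBL mu τB) := by
    refine span_dense_into (fun t : TB => ζ (eK mu) * (t : 𝓜(ℂ, TB)) * ζ (eK mu)) ?_ ?_ ?_
      τB.dense_span (range_jBL_closed mu τB) ?_ t
    · exact (continuous_const.mul isometry_coe.continuous).mul continuous_const
    · intro x y; rw [coe_add, mul_add, add_mul]
    · intro c x; rw [coe_smul, mul_smul_comm, smul_mul_assoc]
    · rintro s ⟨b, k, rfl⟩
      rw [(hζ (eK mu) b k).1, (hζ (eK mu) b (eK mu * k)).2]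
      obtain ⟨c, hc⟩ := corner_scalar mu k
      refine ⟨c • b, ?_⟩
      show (↑(τB.tmul (c • b) (eK mu)) : 𝓜(ℂ, TB)) = _
      rw [hc, τB.smul_tmul, ← τB.tmul_smul]
  obtain ⟨c, hc⟩ := key
  exact ⟨c, hc⟩

lemma exists_L (hζ : IsOneTensorId τB ζ) (hψζ : PsiZeta τA ζ ψ) (a : A) (b : B) :
    ∃ c : B, (↑(τB.tmul c (eK mu)) : 𝓜(ℂ, TB)) =
      ψ (τA.tmul a (eK mu)) * ↑(τB.tmul b (eK mu)) := by
  obtain ⟨c, hc⟩ := exists_corner mu τB ζ hζ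
    ((ψ (τA.tmul a (eK mu))).fst (τB.tmul b (eK mu)))
  refine ⟨c, ?_⟩
  have h1 : (((ψ (τA.tmul a (eK mu))).fst (τB.tmul b (eK mu)) : TB) : 𝓜(ℂ, TB))
      = ψ (τA.tmul a (eK mu)) * ↑(τB.tmul b (eK mu)) := (mul_coe _ _).symm
  have h2 : ζ (eK mu) * ψ (τA.tmul a (eK mu)) = ψ (τA.tmul a (eK mu)) := by
    have h := (hψζ a (eK mu) (eK mu)).2
    rw [e_mul_e] at h
    exact h.symm
  have h3 : (↑(τB.tmul b (eK mu)) : 𝓜(ℂ, TB)) * ζ (eK mu) = ↑(τB.tmul b (eK mu)) := by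
    have h := (hζ (eK mu) b (eK mu)).2
    rwa [e_mul_e] at h
  rw [hc, h1, ← mul_assoc, h2, mul_assoc, h3]

lemma exists_R (hζ : IsOneTensorId τB ζ) (hψζ : PsiZeta τA ζ ψ) (a : A) (b : B) :
    ∃ c : B, (↑(τB.tmul c (eK mu)) : 𝓜(ℂ, TB)) =
      ↑(τB.tmul b (eK mu)) * ψ (τA.tmul a (eK mu)) := by
  obtain ⟨c, hc⟩ := exists_corner mu τB ζ hζ
    ((ψ (τA.tmul a (eK mu))).snd (τB.tmul b (eK mu)))
  refine ⟨c, ?_⟩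
  have h1 : (((ψ (τA.tmul a (eK mu))).snd (τB.tmul b (eK mu)) : TB) : 𝓜(ℂ, TB))
      = ↑(τB.tmul b (eK mu)) * ψ (τA.tmul a (eK mu)) := (coe_mul' _ _).symm
  have h2 : ψ (τA.tmul a (eK mu)) * ζ (eK mu) = ψ (τA.tmul a (eK mu)) := by
    have h := (hψζ a (eK mu) (eK mu)).1
    rw [e_mul_e] at h
    exact h.symm
  have h3 : ζ (eK mu) * (↑(τB.tmul b (eK mu)) : 𝓜(ℂ, TB)) = ↑(τB.tmul b (eK mu)) := by
    have h := (hζ (eK mu) b (eK mu)).1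
    rwa [e_mul_e] at h
  rw [hc, h1, ← mul_assoc, mul_assoc _ _ (ζ (eK mu)), h2, h3]

def Lfun (hζ : IsOneTensorId τB ζ) (hψζ : PsiZeta τA ζ ψ) (a : A) (b : B) : B := (exists_L mu τA τB ζ ψ hζ hψζ a b).choose

lemma Lfun_spec (hζ : IsOneTensorId τB ζ) (hψζ : PsiZeta τA ζ ψ) (a : A) (b : B) :
    (↑(τB.tmul (Lfun mu τA τB ζ ψ hζ hψζ a b) (eK mu)) : 𝓜(ℂ, TB)) =
      ψ (τA.tmul a (eK mu)) * ↑(τB.tmul b (eK mu)) :=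
  (exists_L mu τA τB ζ ψ hζ hψζ a b).choose_spec

def Rfun (hζ : IsOneTensorId τB ζ) (hψζ : PsiZeta τA ζ ψ) (a : A) (b : B) : B := (exists_R mu τA τB ζ ψ hζ hψζ a b).choose

lemma Rfun_spec (hζ : IsOneTensorId τB ζ) (hψζ : PsiZeta τA ζ ψ) (a : A) (b : B) :
    (↑(τB.tmul (Rfun mu τA τB ζ ψ hζ hψζ a b) (eK mu)) : 𝓜(ℂ, TB)) =
      ↑(τB.tmul b (eK mu)) * ψ (τA.tmul a (eK mu)) :=
  (exists_R mu τA τB ζ ψ hζ hψζ a b).choose_spec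

end Main

section Phi
variable {K A B TA TB : Type*} [NonUnitalCStarAlgebra K] [NonUnitalCStarAlgebra A]
  [NonUnitalCStarAlgebra B] [NonUnitalCStarAlgebra TA] [NonUnitalCStarAlgebra TB]
variable (mu : MatrixUnits K) (τA : CStarTensor A K TA) (τB : CStarTensor B K TB)
  (ζ : K →⋆ₙₐ[ℂ] 𝓜(ℂ, TB)) (ψ : TA →⋆ₙₐ[ℂ] 𝓜(ℂ, TB))
  (hζ : IsOneTensorId τB ζ) (hψζ : PsiZeta τA ζ ψ)

lemma tmulA_e_mul (a a' : A) :
    τA.tmul (a * a') (eK mu) = τA.tmul a (eK mu) * τA.tmul a' (eK mu) := by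
  rw [τA.tmul_mul_tmul, e_mul_e]

lemma tmulB_e_mul (b b' : B) :
    τB.tmul (b * b') (eK mu) = τB.tmul b (eK mu) * τB.tmul b' (eK mu) := by
  rw [τB.tmul_mul_tmul, e_mul_e]

lemma L_add_right (a : A) (b b' : B) :
    Lfun mu τA τB ζ ψ hζ hψζ a (b + b') =
      Lfun mu τA τB ζ ψ hζ hψζ a b + Lfun mu τA τB ζ ψ hζ hψζ a b' := by
  refine jB_inj mu τB ?_
  simp only [Lfun_spec, τB.add_tmul, coe_add, mul_add]

lemma L_smul_right (a : A) (c : ℂ) (b : B) :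
    Lfun mu τA τB ζ ψ hζ hψζ a (c • b) = c • Lfun mu τA τB ζ ψ hζ hψζ a b := by
  refine jB_inj mu τB ?_
  simp only [Lfun_spec, τB.smul_tmul, coe_smul, mul_smul_comm]

lemma R_add_right (a : A) (b b' : B) :
    Rfun mu τA τB ζ ψ hζ hψζ a (b + b') =
      Rfun mu τA τB ζ ψ hζ hψζ a b + Rfun mu τA τB ζ ψ hζ hψζ a b' := by
  refine jB_inj mu τB ?_
  simp only [Rfun_spec, τB.add_tmul, coe_add, add_mul]

lemma R_smul_right (a : A) (c : ℂ) (b : B) :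
    Rfun mu τA τB ζ ψ hζ hψζ a (c • b) = c • Rfun mu τA τB ζ ψ hζ hψζ a b := by
  refine jB_inj mu τB ?_
  simp only [Rfun_spec, τB.smul_tmul, coe_smul, smul_mul_assoc]

lemma L_norm (a : A) (b : B) :
    ‖Lfun mu τA τB ζ ψ hζ hψζ a b‖ ≤ ‖ψ (τA.tmul a (eK mu))‖ * ‖b‖ := by
  have h0 : ∀ x : B, ‖(↑(τB.tmul x (eK mu)) : 𝓜(ℂ, TB))‖ = ‖x‖ := fun x => by
    rw [norm_coe, τB.norm_tmul, norm_e, mul_one]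
  rw [← h0, Lfun_spec]
  calc ‖ψ (τA.tmul a (eK mu)) * ↑(τB.tmul b (eK mu))‖
      ≤ ‖ψ (τA.tmul a (eK mu))‖ * ‖(↑(τB.tmul b (eK mu)) : 𝓜(ℂ, TB))‖ := norm_mul_le _ _
    _ = ‖ψ (τA.tmul a (eK mu))‖ * ‖b‖ := by rw [h0]

lemma R_norm (a : A) (b : B) :
    ‖Rfun mu τA τB ζ ψ hζ hψζ a b‖ ≤ ‖ψ (τA.tmul a (eK mu))‖ * ‖b‖ := by
  have h0 : ∀ x : B, ‖(↑(τB.tmul x (eK mu)) : 𝓜(ℂ, TB))‖ = ‖x‖ := fun x => by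
    rw [norm_coe, τB.norm_tmul, norm_e, mul_one]
  rw [← h0, Rfun_spec]
  calc ‖(↑(τB.tmul b (eK mu)) : 𝓜(ℂ, TB)) * ψ (τA.tmul a (eK mu))‖
      ≤ ‖(↑(τB.tmul b (eK mu)) : 𝓜(ℂ, TB))‖ * ‖ψ (τA.tmul a (eK mu))‖ := norm_mul_le _ _
    _ = ‖ψ (τA.tmul a (eK mu))‖ * ‖b‖ := by rw [h0, mul_comm]

lemma LR_central (a : A) (x y : B) :
    Rfun mu τA τB ζ ψ hζ hψζ a x * y = x * Lfun mu τA τB ζ ψ hζ hψζ a y := by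
  refine jB_inj mu τB ?_
  rw [tmulB_e_mul, tmulB_e_mul, coe_mul_coe, coe_mul_coe, Rfun_spec, Lfun_spec, mul_assoc]

def phiM (a : A) : 𝓜(ℂ, B) where
  toProd :=
    (LinearMap.mkContinuous
      { toFun := Lfun mu τA τB ζ ψ hζ hψζ a
        map_add' := L_add_right mu τA τB ζ ψ hζ hψζ a
        map_smul' := fun c b => by
          simp only [RingHom.id_apply]
          exact L_smul_right mu τA τB ζ ψ hζ hψζ a c b }
      ‖ψ (τA.tmul a (eK mu))‖ (L_norm mu τA τB ζ ψ hζ hψζ a),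
     LinearMap.mkContinuous
      { toFun := Rfun mu τA τB ζ ψ hζ hψζ a
        map_add' := R_add_right mu τA τB ζ ψ hζ hψζ a
        map_smul' := fun c b => by
          simp only [RingHom.id_apply]
          exact R_smul_right mu τA τB ζ ψ hζ hψζ a c b }
      ‖ψ (τA.tmul a (eK mu))‖ (R_norm mu τA τB ζ ψ hζ hψζ a))
  central := LR_central mu τA τB ζ ψ hζ hψζ a

lemma phiM_fst (a : A) (b : B) :
    (phiM mu τA τB ζ ψ hζ hψζ a).fst b = Lfun mu τA τB ζ ψ hζ hψζ a b := rfl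

lemma phiM_snd (a : A) (b : B) :
    (phiM mu τA τB ζ ψ hζ hψζ a).snd b = Rfun mu τA τB ζ ψ hζ hψζ a b := rfl

end Phi

section PhiHom
variable {K A B TA TB : Type*} [NonUnitalCStarAlgebra K] [NonUnitalCStarAlgebra A]
  [NonUnitalCStarAlgebra B] [NonUnitalCStarAlgebra TA] [NonUnitalCStarAlgebra TB]
variable (mu : MatrixUnits K) (τA : CStarTensor A K TA) (τB : CStarTensor B K TB)
  (ζ : K →⋆ₙₐ[ℂ] 𝓜(ℂ, TB)) (ψ : TA →⋆ₙₐ[ℂ] 𝓜(ℂ, TB))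
  (hζ : IsOneTensorId τB ζ) (hψζ : PsiZeta τA ζ ψ)

lemma L_add_left (a a' : A) (b : B) :
    Lfun mu τA τB ζ ψ hζ hψζ (a + a') b =
      Lfun mu τA τB ζ ψ hζ hψζ a b + Lfun mu τA τB ζ ψ hζ hψζ a' b := by
  refine jB_inj mu τB ?_
  simp only [Lfun_spec, τA.add_tmul, τB.add_tmul, map_add, coe_add, add_mul]

lemma R_add_left (a a' : A) (b : B) :
    Rfun mu τA τB ζ ψ hζ hψζ (a + a') b =
      Rfun mu τA τB ζ ψ hζ hψζ a b + Rfun mu τA τB ζ ψ hζ hψζ a' b := by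
  refine jB_inj mu τB ?_
  simp only [Rfun_spec, τA.add_tmul, τB.add_tmul, map_add, coe_add, mul_add]

lemma L_smul_left (c : ℂ) (a : A) (b : B) :
    Lfun mu τA τB ζ ψ hζ hψζ (c • a) b = c • Lfun mu τA τB ζ ψ hζ hψζ a b := by
  refine jB_inj mu τB ?_
  simp only [Lfun_spec, τA.smul_tmul, τB.smul_tmul, map_smul, coe_smul, smul_mul_assoc]

lemma R_smul_left (c : ℂ) (a : A) (b : B) :
    Rfun mu τA τB ζ ψ hζ hψζ (c • a) b = c • Rfun mu τA τB ζ ψ hζ hψζ a b := by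
  refine jB_inj mu τB ?_
  simp only [Rfun_spec, τA.smul_tmul, τB.smul_tmul, map_smul, coe_smul, mul_smul_comm]

lemma L_zero (b : B) : Lfun mu τA τB ζ ψ hζ hψζ 0 b = 0 := by
  refine jB_inj mu τB ?_
  simp only [Lfun_spec, tmul_zero_left τA, tmul_zero_left τB, map_zero, zero_mul, coe_zero]

lemma R_zero (b : B) : Rfun mu τA τB ζ ψ hζ hψζ 0 b = 0 := by
  refine jB_inj mu τB ?_
  simp only [Rfun_spec, tmul_zero_left τA, tmul_zero_left τB, map_zero, mul_zero, coe_zero]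

lemma L_mul (a a' : A) (b : B) :
    Lfun mu τA τB ζ ψ hζ hψζ (a * a') b =
      Lfun mu τA τB ζ ψ hζ hψζ a (Lfun mu τA τB ζ ψ hζ hψζ a' b) := by
  refine jB_inj mu τB ?_
  simp only [Lfun_spec, tmulA_e_mul, map_mul, mul_assoc]

lemma R_mul (a a' : A) (b : B) :
    Rfun mu τA τB ζ ψ hζ hψζ (a * a') b =
      Rfun mu τA τB ζ ψ hζ hψζ a' (Rfun mu τA τB ζ ψ hζ hψζ a b) := by
  refine jB_inj mu τB ?_
  simp only [Rfun_spec, tmulA_e_mul, map_mul, mul_assoc]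

lemma L_star (a : A) (b : B) :
    Lfun mu τA τB ζ ψ hζ hψζ (star a) b =
      star (Rfun mu τA τB ζ ψ hζ hψζ a (star b)) := by
  refine jB_inj mu τB ?_
  have h1 : τB.tmul (star (Rfun mu τA τB ζ ψ hζ hψζ a (star b))) (eK mu)
      = star (τB.tmul (Rfun mu τA τB ζ ψ hζ hψζ a (star b)) (eK mu)) := by
    rw [τB.star_tmul, star_e]
  rw [Lfun_spec, h1, coe_star, Rfun_spec, star_mul, ← coe_star, τB.star_tmul, star_star,
    star_e, ← map_star, τA.star_tmul, star_e]

lemma R_star (a : A) (b : B) :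
    Rfun mu τA τB ζ ψ hζ hψζ (star a) b =
      star (Lfun mu τA τB ζ ψ hζ hψζ a (star b)) := by
  refine jB_inj mu τB ?_
  have h1 : τB.tmul (star (Lfun mu τA τB ζ ψ hζ hψζ a (star b))) (eK mu)
      = star (τB.tmul (Lfun mu τA τB ζ ψ hζ hψζ a (star b)) (eK mu)) := by
    rw [τB.star_tmul, star_e]
  rw [Rfun_spec, h1, coe_star, Lfun_spec, star_mul, ← coe_star, τB.star_tmul, star_star,
    star_e, ← map_star, τA.star_tmul, star_e]

lemma phiM_add (a a' : A) :
    phiM mu τA τB ζ ψ hζ hψζ (a + a') =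
      phiM mu τA τB ζ ψ hζ hψζ a + phiM mu τA τB ζ ψ hζ hψζ a' := by
  refine M_ext (fun b => ?_) (fun b => ?_)
  · rw [DoubleCentralizer.add_fst, ContinuousLinearMap.add_apply,
      phiM_fst, phiM_fst, phiM_fst]
    exact L_add_left mu τA τB ζ ψ hζ hψζ a a' b
  · rw [DoubleCentralizer.add_snd, ContinuousLinearMap.add_apply,
      phiM_snd, phiM_snd, phiM_snd]
    exact R_add_left mu τA τB ζ ψ hζ hψζ a a' b

lemma phiM_smul (c : ℂ) (a : A) :
    phiM mu τA τB ζ ψ hζ hψζ (c • a) = c • phiM mu τA τB ζ ψ hζ hψζ a := by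
  refine M_ext (fun b => ?_) (fun b => ?_)
  · rw [DoubleCentralizer.smul_fst, ContinuousLinearMap.smul_apply, phiM_fst, phiM_fst]
    exact L_smul_left mu τA τB ζ ψ hζ hψζ c a b
  · rw [DoubleCentralizer.smul_snd, ContinuousLinearMap.smul_apply, phiM_snd, phiM_snd]
    exact R_smul_left mu τA τB ζ ψ hζ hψζ c a b

lemma phiM_zero : phiM mu τA τB ζ ψ hζ hψζ 0 = 0 := by
  refine M_ext (fun b => ?_) (fun b => ?_)
  · rw [DoubleCentralizer.zero_fst, ContinuousLinearMap.zero_apply, phiM_fst]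
    exact L_zero mu τA τB ζ ψ hζ hψζ b
  · rw [DoubleCentralizer.zero_snd, ContinuousLinearMap.zero_apply, phiM_snd]
    exact R_zero mu τA τB ζ ψ hζ hψζ b

lemma phiM_mul (a a' : A) :
    phiM mu τA τB ζ ψ hζ hψζ (a * a') =
      phiM mu τA τB ζ ψ hζ hψζ a * phiM mu τA τB ζ ψ hζ hψζ a' := by
  refine M_ext (fun b => ?_) (fun b => ?_)
  · rw [DoubleCentralizer.mul_fst, ContinuousLinearMap.mul_apply,
      phiM_fst, phiM_fst, phiM_fst]
    exact L_mul mu τA τB ζ ψ hζ hψζ a a' b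
  · rw [DoubleCentralizer.mul_snd, ContinuousLinearMap.mul_apply,
      phiM_snd, phiM_snd, phiM_snd]
    exact R_mul mu τA τB ζ ψ hζ hψζ a a' b

lemma phiM_star (a : A) :
    phiM mu τA τB ζ ψ hζ hψζ (star a) = star (phiM mu τA τB ζ ψ hζ hψζ a) := by
  refine M_ext (fun b => ?_) (fun b => ?_)
  · rw [DoubleCentralizer.star_fst, phiM_fst, phiM_snd]
    exact L_star mu τA τB ζ ψ hζ hψζ a b
  · rw [DoubleCentralizer.star_snd, phiM_snd, phiM_fst]
    exact R_star mu τA τB ζ ψ hζ hψζ a b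

def phiHom : A →⋆ₙₐ[ℂ] 𝓜(ℂ, B) where
  toFun := phiM mu τA τB ζ ψ hζ hψζ
  map_add' := phiM_add mu τA τB ζ ψ hζ hψζ
  map_smul' := phiM_smul mu τA τB ζ ψ hζ hψζ
  map_zero' := phiM_zero mu τA τB ζ ψ hζ hψζ
  map_mul' := phiM_mul mu τA τB ζ ψ hζ hψζ
  map_star' := phiM_star mu τA τB ζ ψ hζ hψζ

lemma phiHom_fst (a : A) (b : B) :
    ((phiHom mu τA τB ζ ψ hζ hψζ a) : 𝓜(ℂ, B)).fst b = Lfun mu τA τB ζ ψ hζ hψζ a b := rfl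

lemma phiHom_snd (a : A) (b : B) :
    ((phiHom mu τA τB ζ ψ hζ hψζ a) : 𝓜(ℂ, B)).snd b = Rfun mu τA τB ζ ψ hζ hψζ a b := rfl

lemma phiHom_apply (a : A) :
    phiHom mu τA τB ζ ψ hζ hψζ a = phiM mu τA τB ζ ψ hζ hψζ a := rfl

end PhiHom

section Action
variable {K A B TA TB : Type*} [NonUnitalCStarAlgebra K] [NonUnitalCStarAlgebra A]
  [NonUnitalCStarAlgebra B] [NonUnitalCStarAlgebra TA] [NonUnitalCStarAlgebra TB]
variable (mu : MatrixUnits K) (τA : CStarTensor A K TA) (τB : CStarTensor B K TB)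
  (ζ : K →⋆ₙₐ[ℂ] 𝓜(ℂ, TB)) (ψ : TA →⋆ₙₐ[ℂ] 𝓜(ℂ, TB))
  (hζ : IsOneTensorId τB ζ) (hψζ : PsiZeta τA ζ ψ)

lemma psi_cont : Continuous ψ :=
  AddMonoidHomClass.continuous_of_bound ψ 1 fun x => by
    simpa only [one_mul] using NonUnitalStarAlgHom.norm_apply_le ψ x

lemma psi_factor (hψζ : PsiZeta τA ζ ψ) (a : A) (i j : ℕ) :
    ψ (τA.tmul a (mu.u i j)) =
      ζ (mu.u i 0) * (ψ (τA.tmul a (eK mu)) * ζ (mu.u 0 j)) := by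
  have h0 : mu.u i j = mu.u i 0 * (eK mu * mu.u 0 j) := by
    rw [eK, mu.u_mul, if_pos rfl, mu.u_mul, if_pos rfl]
  rw [h0, (hψζ a (mu.u i 0) (eK mu * mu.u 0 j)).2, (hψζ a (mu.u 0 j) (eK mu)).1]

lemma L_action_e (a : A) (b : B) (m : K) :
    ψ (τA.tmul a (eK mu)) * ↑(τB.tmul b (eK mu * m)) =
      ↑(τB.tmul (Lfun mu τA τB ζ ψ hζ hψζ a b) (eK mu * m)) := by
  rw [← (hζ m b (eK mu)).2, ← mul_assoc, ← Lfun_spec mu τA τB ζ ψ hζ hψζ a b,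
    (hζ m (Lfun mu τA τB ζ ψ hζ hψζ a b) (eK mu)).2]

lemma R_action_e (a : A) (b : B) (m : K) :
    ↑(τB.tmul b (m * eK mu)) * ψ (τA.tmul a (eK mu)) =
      ↑(τB.tmul (Rfun mu τA τB ζ ψ hζ hψζ a b) (m * eK mu)) := by
  rw [← (hζ m b (eK mu)).1, mul_assoc, ← Rfun_spec mu τA τB ζ ψ hζ hψζ a b,
    (hζ m (Rfun mu τA τB ζ ψ hζ hψζ a b) (eK mu)).1]

lemma L_action (a : A) (b : B) (k k' : K) :
    ψ (τA.tmul a k) * ↑(τB.tmul b k') =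
      ↑(τB.tmul (Lfun mu τA τB ζ ψ hζ hψζ a b) (k * k')) := by
  refine span_dense_eq
    (f := fun k : K => ψ (τA.tmul a k) * (↑(τB.tmul b k') : 𝓜(ℂ, TB)))
    (g := fun k : K =>
      (↑(τB.tmul (Lfun mu τA τB ζ ψ hζ hψζ a b) (k * k')) : 𝓜(ℂ, TB)))
    ?_ ?_ ?_ ?_ ?_ ?_ mu.dense_span ?_ k
  · exact ((psi_cont ψ).comp (continuous_tmul_right τA a)).mul continuous_const
  · exact isometry_coe.continuous.comp
      ((continuous_tmul_right τB _).comp (continuous_mul_right k'))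
  · intro x y; rw [τA.tmul_add, map_add, add_mul]
  · intro x y; rw [add_mul, τB.tmul_add, coe_add]
  · intro c x; rw [τA.tmul_smul, map_smul, smul_mul_assoc]
  · intro c x; rw [smul_mul_assoc, τB.tmul_smul, coe_smul]
  · rintro s ⟨⟨i, j⟩, rfl⟩
    simp only []
    rw [psi_factor mu τA ζ ψ hψζ a i j, mul_assoc, mul_assoc, (hζ (mu.u 0 j) b k').1]
    have h2 : mu.u 0 j * k' = eK mu * (mu.u 0 j * k') := by
      rw [← mul_assoc, eK, mu.u_mul, if_pos rfl]
    rw [h2, L_action_e mu τA τB ζ ψ hζ hψζ a b (mu.u 0 j * k'), ← h2,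
      (hζ (mu.u i 0) (Lfun mu τA τB ζ ψ hζ hψζ a b) (mu.u 0 j * k')).1,
      ← mul_assoc, mu.u_mul, if_pos rfl]

lemma R_action (a : A) (b : B) (k k' : K) :
    (↑(τB.tmul b k') : 𝓜(ℂ, TB)) * ψ (τA.tmul a k) =
      ↑(τB.tmul (Rfun mu τA τB ζ ψ hζ hψζ a b) (k' * k)) := by
  refine span_dense_eq
    (f := fun k : K => (↑(τB.tmul b k') : 𝓜(ℂ, TB)) * ψ (τA.tmul a k))
    (g := fun k : K =>
      (↑(τB.tmul (Rfun mu τA τB ζ ψ hζ hψζ a b) (k' * k)) : 𝓜(ℂ, TB)))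
    ?_ ?_ ?_ ?_ ?_ ?_ mu.dense_span ?_ k
  · exact continuous_const.mul ((psi_cont ψ).comp (continuous_tmul_right τA a))
  · exact isometry_coe.continuous.comp
      ((continuous_tmul_right τB _).comp (continuous_mul_left k'))
  · intro x y; rw [τA.tmul_add, map_add, mul_add]
  · intro x y; rw [mul_add, τB.tmul_add, coe_add]
  · intro c x; rw [τA.tmul_smul, map_smul, mul_smul_comm]
  · intro c x; rw [mul_smul_comm, τB.tmul_smul, coe_smul]
  · rintro s ⟨⟨i, j⟩, rfl⟩
    simp only []
    rw [psi_factor mu τA ζ ψ hψζ a i j, ← mul_assoc, (hζ (mu.u i 0) b k').2,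
      ← mul_assoc]
    have h2 : k' * mu.u i 0 = k' * mu.u i 0 * eK mu := by
      rw [mul_assoc, eK, mu.u_mul, if_pos rfl]
    rw [h2, R_action_e mu τA τB ζ ψ hζ hψζ a b (k' * mu.u i 0), ← h2,
      (hζ (mu.u 0 j) (Rfun mu τA τB ζ ψ hζ hψζ a b) (k' * mu.u i 0)).2,
      mul_assoc, mu.u_mul, if_pos rfl]

end Action

section Nondeg
variable {K A B TA TB : Type*} [NonUnitalCStarAlgebra K] [NonUnitalCStarAlgebra A]
  [NonUnitalCStarAlgebra B] [NonUnitalCStarAlgebra TA] [NonUnitalCStarAlgebra TB]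
variable (mu : MatrixUnits K) (τA : CStarTensor A K TA) (τB : CStarTensor B K TB)
  (ζ : K →⋆ₙₐ[ℂ] 𝓜(ℂ, TB)) (ψ : TA →⋆ₙₐ[ℂ] 𝓜(ℂ, TB))
  (hζ : IsOneTensorId τB ζ) (hψζ : PsiZeta τA ζ ψ)

lemma phi_nondeg (hψ : Nondegenerate ψ) :
    Nondegenerate (phiHom mu τA τB ζ ψ hζ hψζ) := by
  intro b
  set G : Set 𝓜(ℂ, TB) :=
    {x | ∃ (a : A) (c : B), x = ψ (τA.tmul a (eK mu)) * ↑(τB.tmul c (eK mu))} with hG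
  set W : Submodule ℂ 𝓜(ℂ, TB) := (Submodule.span ℂ G).topologicalClosure with hW
  have hWclosed : IsClosed (W : Set 𝓜(ℂ, TB)) := Submodule.isClosed_topologicalClosure _
  have hGW : G ⊆ (W : Set 𝓜(ℂ, TB)) := fun x hx =>
    Submodule.le_topologicalClosure _ (Submodule.subset_span hx)
  have inner : ∀ (a : A) (k : K) (t : TB),
      ζ (eK mu) * (ψ (τA.tmul a k) * (↑t : 𝓜(ℂ, TB))) * ζ (eK mu) ∈ W := by
    intro a k t
    refine span_dense_into
      (f := fun t : TB => ζ (eK mu) * (ψ (τA.tmul a k) * (↑t : 𝓜(ℂ, TB))) * ζ (eK mu))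
      ?_ ?_ ?_ τB.dense_span hWclosed ?_ t
    · exact (continuous_const.mul (continuous_const.mul isometry_coe.continuous)).mul
        continuous_const
    · intro x y; rw [coe_add, mul_add, mul_add, add_mul]
    · intro c x
      rw [coe_smul, mul_smul_comm, mul_smul_comm, smul_mul_assoc]
    · rintro s ⟨b', k'', rfl⟩
      rw [← mul_assoc, ← (hψζ a (eK mu) k).2, (hψζ a k (eK mu)).1,
        mul_assoc (ψ (τA.tmul a (eK mu))) (ζ k) _, (hζ k b' k'').1,
        mul_assoc, (hζ (eK mu) b' (k * k'')).2]
      have he : ψ (τA.tmul a (eK mu)) = ψ (τA.tmul a (eK mu)) * ζ (eK mu) := by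
        have h := (hψζ a (eK mu) (eK mu)).1
        rwa [e_mul_e] at h
      obtain ⟨c0, hc0⟩ := corner_scalar mu (k * k'')
      have harg : eK mu * (k * k'' * eK mu) = c0 • eK mu := by
        rw [← mul_assoc]; exact hc0
      rw [he, mul_assoc, (hζ (eK mu) b' (k * k'' * eK mu)).1, harg,
        τB.tmul_smul, coe_smul, mul_smul_comm]
      exact W.smul_mem c0 (hGW ⟨a, b', rfl⟩)
  have outer : ∀ (x : TA) (t : TB),
      ζ (eK mu) * (ψ x * (↑t : 𝓜(ℂ, TB))) * ζ (eK mu) ∈ W := by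
    intro x t
    refine span_dense_into
      (f := fun x : TA => ζ (eK mu) * (ψ x * (↑t : 𝓜(ℂ, TB))) * ζ (eK mu))
      ?_ ?_ ?_ τA.dense_span hWclosed ?_ x
    · exact (continuous_const.mul ((psi_cont ψ).mul continuous_const)).mul continuous_const
    · intro x y; rw [map_add, add_mul, mul_add, add_mul]
    · intro c x
      rw [map_smul, smul_mul_assoc, mul_smul_comm, smul_mul_assoc]
    · rintro s ⟨a, k, rfl⟩
      exact inner a k t
  have hbe : (↑(τB.tmul b (eK mu)) : 𝓜(ℂ, TB)) ∈ W := by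
    have hfix : ζ (eK mu) * (↑(τB.tmul b (eK mu)) : 𝓜(ℂ, TB)) * ζ (eK mu)
        = ↑(τB.tmul b (eK mu)) := by
      rw [(hζ (eK mu) b (eK mu)).1, e_mul_e, (hζ (eK mu) b (eK mu)).2, e_mul_e]
    rw [← hfix]
    refine closure_span_into (f := fun m : 𝓜(ℂ, TB) => ζ (eK mu) * m * ζ (eK mu))
      ?_ ?_ ?_ hWclosed ?_ (hψ (τB.tmul b (eK mu)))
    · exact (continuous_const.mul continuous_id).mul continuous_const
    · intro x y; rw [mul_add, add_mul]
    · intro c x; rw [mul_smul_comm, smul_mul_assoc]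
    · rintro s ⟨xa, t, rfl⟩
      exact outer xa t
  have hb : b ∈ closure (Submodule.span ℂ
      {c : B | ∃ (a : A) (b' : B), c = Lfun mu τA τB ζ ψ hζ hψζ a b'} : Set B) := by
    refine isometry_pullback (jBL mu τB) (isometry_jBL mu τB) _ ?_
    have himg : G = ⇑(jBL mu τB) ''
        {c : B | ∃ (a : A) (b' : B), c = Lfun mu τA τB ζ ψ hζ hψζ a b'} := by
      ext x
      constructor
      · rintro ⟨a, c, rfl⟩
        refine ⟨Lfun mu τA τB ζ ψ hζ hψζ a c, ⟨a, c, rfl⟩, ?_⟩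
        show (↑(τB.tmul (Lfun mu τA τB ζ ψ hζ hψζ a c) (eK mu)) : 𝓜(ℂ, TB)) = _
        exact Lfun_spec mu τA τB ζ ψ hζ hψζ a c
      · rintro ⟨c, ⟨a, b', rfl⟩, rfl⟩
        refine ⟨a, b', ?_⟩
        show (↑(τB.tmul (Lfun mu τA τB ζ ψ hζ hψζ a b') (eK mu)) : 𝓜(ℂ, TB)) = _
        exact Lfun_spec mu τA τB ζ ψ hζ hψζ a b'
    have hmem : (↑(τB.tmul b (eK mu)) : 𝓜(ℂ, TB))
        ∈ closure (Submodule.span ℂ G : Set 𝓜(ℂ, TB)) := by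
      rw [← Submodule.topologicalClosure_coe]
      exact hbe
    rw [himg] at hmem
    show (↑(τB.tmul b (eK mu)) : 𝓜(ℂ, TB)) ∈ _
    exact hmem
  have final : (b : 𝓜(ℂ, B)) ∈ (Submodule.span ℂ
      {x : 𝓜(ℂ, B) | ∃ (a : A) (c : B),
        x = phiHom mu τA τB ζ ψ hζ hψζ a * c}).topologicalClosure := by
    refine closure_span_into (f := ((↑) : B → 𝓜(ℂ, B))) isometry_coe.continuous
      coe_add coe_smul (Submodule.isClosed_topologicalClosure _) ?_ hb
    rintro s ⟨a, b', rfl⟩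
    refine Submodule.le_topologicalClosure _ (Submodule.subset_span ?_)
    exact ⟨a, b', by rw [mul_coe, phiHom_fst]⟩
  rw [← Submodule.topologicalClosure_coe]
  exact final

end Nondeg

end Stmt7Aux

/-- Let `ψ : A ⊗ 𝒦 → M(B ⊗ 𝒦)` be a nondegenerate homomorphism whose
multiplier extension satisfies `ψ(1_A ⊗ k) = 1_B ⊗ k` for all `k ∈ 𝒦` (expressed here on
elementary tensors: `ψ(a ⊗ k'k) = ψ(a ⊗ k')·(1 ⊗ k)` and `ψ(a ⊗ kk') = (1 ⊗ k)·ψ(a ⊗ k')`).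
Then there is a unique nondegenerate homomorphism `φ : A → M(B)` with `ψ = φ ⊗ id_𝒦`; the
identity `ψ = φ ⊗ id_𝒦` is expressed by the action of `ψ(a ⊗ k) = φ(a) ⊗ k ∈ M(B ⊗ 𝒦)`
on elementary tensors: `(φ(a) ⊗ k)·(b ⊗ k') = (φ(a)·b) ⊗ (k·k')` and
`(b ⊗ k')·(φ(a) ⊗ k) = (b·φ(a)) ⊗ (k'·k)`. -/
theorem exists_unique_destabilized_hom
    {K A B TA TB : Type*} [NonUnitalCStarAlgebra K] [NonUnitalCStarAlgebra A]
    [NonUnitalCStarAlgebra B] [NonUnitalCStarAlgebra TA] [NonUnitalCStarAlgebra TB]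
    (hK : IsCompactOperatorsAlgebra K)
    (τA : CStarTensor A K TA) (τB : CStarTensor B K TB)
    (ζ : K →⋆ₙₐ[ℂ] 𝓜(ℂ, TB)) (hζ : IsOneTensorId τB ζ)
    (ψ : TA →⋆ₙₐ[ℂ] 𝓜(ℂ, TB)) (hψ : Nondegenerate ψ)
    (hψζ : ∀ (a : A) (k k' : K),
      ψ (τA.tmul a (k' * k)) = ψ (τA.tmul a k') * ζ k ∧
        ψ (τA.tmul a (k * k')) = ζ k * ψ (τA.tmul a k')) :
    ∃! φ : A →⋆ₙₐ[ℂ] 𝓜(ℂ, B), Nondegenerate φ ∧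
      ∀ (a : A) (k : K) (b : B) (k' : K),
        (∃ c : B, (c : 𝓜(ℂ, B)) = φ a * b ∧
          ψ (τA.tmul a k) * (τB.tmul b k' : 𝓜(ℂ, TB)) = (τB.tmul c (k * k') : 𝓜(ℂ, TB))) ∧
        (∃ c' : B, (c' : 𝓜(ℂ, B)) = (b : 𝓜(ℂ, B)) * φ a ∧
          (τB.tmul b k' : 𝓜(ℂ, TB)) * ψ (τA.tmul a k) =
            (τB.tmul c' (k' * k) : 𝓜(ℂ, TB))) := by
  classical
  obtain ⟨mu⟩ := hK
  have hψζ' : Stmt7Aux.PsiZeta τA ζ ψ := hψζ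
  refine ⟨Stmt7Aux.phiHom mu τA τB ζ ψ hζ hψζ',
    ⟨Stmt7Aux.phi_nondeg mu τA τB ζ ψ hζ hψζ' hψ, ?_⟩, ?_⟩
  · intro a k b k'
    refine ⟨⟨Stmt7Aux.Lfun mu τA τB ζ ψ hζ hψζ' a b, ?_, ?_⟩,
      ⟨Stmt7Aux.Rfun mu τA τB ζ ψ hζ hψζ' a b, ?_, ?_⟩⟩
    · rw [Stmt7Aux.mul_coe, Stmt7Aux.phiHom_fst]
    · exact Stmt7Aux.L_action mu τA τB ζ ψ hζ hψζ' a b k k'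
    · rw [Stmt7Aux.coe_mul', Stmt7Aux.phiHom_snd]
    · exact Stmt7Aux.R_action mu τA τB ζ ψ hζ hψζ' a b k k'
  · rintro φ' ⟨-, hφ'⟩
    refine DFunLike.ext _ _ fun a => ?_
    refine Stmt7Aux.M_ext (fun x => ?_) (fun x => ?_)
    · obtain ⟨⟨c, hc1, hc2⟩, -⟩ := hφ' a (Stmt7Aux.eK mu) x (Stmt7Aux.eK mu)
      rw [Stmt7Aux.e_mul_e] at hc2
      have hcL : Stmt7Aux.Lfun mu τA τB ζ ψ hζ hψζ' a x = c :=
        Stmt7Aux.jB_inj mu τB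
          ((Stmt7Aux.Lfun_spec mu τA τB ζ ψ hζ hψζ' a x).trans hc2)
      have h1 : ((φ' a).fst x : B) = c :=
        Stmt7Aux.coe_inj (by rw [← Stmt7Aux.mul_coe, ← hc1])
      rw [Stmt7Aux.phiHom_fst, h1]
      exact hcL.symm
    · obtain ⟨-, ⟨c', hc1', hc2'⟩⟩ := hφ' a (Stmt7Aux.eK mu) x (Stmt7Aux.eK mu)
      rw [Stmt7Aux.e_mul_e] at hc2'
      have hcR : Stmt7Aux.Rfun mu τA τB ζ ψ hζ hψζ' a x = c' :=
        Stmt7Aux.jB_inj mu τB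
          ((Stmt7Aux.Rfun_spec mu τA τB ζ ψ hζ hψζ' a x).trans hc2')
      have h1' : ((φ' a).snd x : B) = c' :=
        Stmt7Aux.coe_inj (by rw [← Stmt7Aux.coe_mul', ← hc1'])
      rw [Stmt7Aux.phiHom_snd, h1']
      exact hcR.symm
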